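/- Let S = ℤ[p₁, e, b]/(2b). For every pair of natural numbers (j₁, j₂) with j₂ even, the monomial p₁^{j₁} e^{j₂} is in the image of the map φ: ℤ[d₂, d₄] → S defined by φ(d₂) = −p₁, φ(d₄) = e²; conversely, p₁^{j₁} e^{j₂} with j₂ odd is not in the subring of S generated by −p₁, e², 2e, and b². -/

import Mathlib

open MvPolynomial

noncomputable def cohIdeal : Ideal (MvPolynomial (Fin 3) ℤ) :=
  Ideal.span {2 * X 2}

noncomputable abbrev CohS : Type := MvPolynomial (Fin 3) ℤ ⧸ cohIdeal

/-- Polynomials over ℤ whose odd-degree coefficients are even. -/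
noncomputable def oddEvenSubring : Subring (Polynomial ℤ) where
  carrier := {f | ∀ n, Odd n → 2 ∣ f.coeff n}
  zero_mem' := by intro n _; simp
  one_mem' := by
    intro n hn
    rw [Polynomial.coeff_one]
    have : n ≠ 0 := by rintro rfl; simp [Nat.odd_iff] at hn
    simp [this]
  add_mem' := by
    intro a b ha hb n hn
    rw [Polynomial.coeff_add]
    exact dvd_add (ha n hn) (hb n hn)
  neg_mem' := by
    intro a ha n hn
    rw [Polynomial.coeff_neg]
    exact (ha n hn).neg_right
  mul_mem' := by
    intro a b ha hb n hn
    rw [Polynomial.coeff_mul]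
    apply Finset.dvd_sum
    rintro ⟨i, j⟩ hij
    rw [Finset.HasAntidiagonal.mem_antidiagonal] at hij
    have : Odd i ∨ Odd j := by
      by_contra h
      push_neg at h
      rw [Nat.not_odd_iff_even, Nat.not_odd_iff_even] at h
      exact (Nat.not_odd_iff_even.2 (h.1.add h.2)) (hij ▸ hn)
    rcases this with h | h
    · exact Dvd.dvd.mul_right (ha i h) _
    · exact Dvd.dvd.mul_left (hb j h) _

noncomputable def evalMap : CohS →+* Polynomial ℤ :=
  Ideal.Quotient.lift cohIdeal
    (MvPolynomial.aeval (R := ℤ) ![1, Polynomial.X, 0]).toRingHom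
    (by
      intro a ha
      have h : cohIdeal ≤ RingHom.ker
          (MvPolynomial.aeval (R := ℤ) ![1, (Polynomial.X : Polynomial ℤ), 0]).toRingHom := by
        rw [cohIdeal, Ideal.span_le]
        rintro x hx
        simp only [Set.mem_singleton_iff] at hx
        subst hx
        simp [RingHom.mem_ker, Matrix.cons_val_two]
      exact h ha)

/-- Monomials `p₁^{j₁} e^{j₂}` with `j₂` even lie in the image of
`ℤ[d₂,d₄] → S`, `d₂ ↦ -p₁`, `d₄ ↦ e²`; but with `j₂` odd they do not lie in the
subring of `S` generated by `-p₁`, `e²`, `2e` and `b²`. -/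
theorem stmt_18 :
    (∀ j₁ k : ℕ,
      Ideal.Quotient.mk cohIdeal (X 0 ^ j₁ * X 1 ^ (2 * k)) ∈
        Set.range ⇑(MvPolynomial.aeval (R := ℤ)
          ![-(Ideal.Quotient.mk cohIdeal (X 0)),
            Ideal.Quotient.mk cohIdeal (X 1) ^ 2] :
          MvPolynomial (Fin 2) ℤ →ₐ[ℤ] CohS)) ∧
    (∀ j₁ j₂ : ℕ, Odd j₂ →
      Ideal.Quotient.mk cohIdeal (X 0 ^ j₁ * X 1 ^ j₂) ∉
        Subring.closure
          {-(Ideal.Quotient.mk cohIdeal (X 0)),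
           Ideal.Quotient.mk cohIdeal (X 1) ^ 2,
           2 * Ideal.Quotient.mk cohIdeal (X 1),
           Ideal.Quotient.mk cohIdeal (X 2) ^ 2}) := by
  constructor
  · intro j₁ k
    refine ⟨(-1 : MvPolynomial (Fin 2) ℤ) ^ j₁ * X 0 ^ j₁ * X 1 ^ k, ?_⟩
    simp only [map_mul, map_pow, map_neg, map_one]
    rw [aeval_X, aeval_X]
    simp only [Matrix.cons_val_zero, Matrix.cons_val_one, Matrix.head_cons]
    rw [← pow_mul]; ring_nf
    have h : ((-1 : CohS)) ^ (j₁ * 2) = 1 := by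
      rw [mul_comm j₁ 2, pow_mul, show ((-1 : CohS)) ^ 2 = 1 by ring, one_pow]
    rw [h, mul_one]
  · intro j₁ j₂ hodd hmem
    have hsub : Subring.closure
          {-(Ideal.Quotient.mk cohIdeal (X 0)),
           Ideal.Quotient.mk cohIdeal (X 1) ^ 2,
           2 * Ideal.Quotient.mk cohIdeal (X 1),
           Ideal.Quotient.mk cohIdeal (X 2) ^ 2} ≤
        oddEvenSubring.comap evalMap := by
      apply Subring.closure_le.2
      rintro x (rfl | rfl | rfl | rfl) <;> rw [SetLike.mem_coe, Subring.mem_comap]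
      · have h1 : evalMap (-(Ideal.Quotient.mk cohIdeal (X 0))) = -1 := by
          simp [evalMap]
        rw [h1]
        exact Subring.neg_mem _ (Subring.one_mem _)
      · have h1 : evalMap (Ideal.Quotient.mk cohIdeal (X 1) ^ 2) =
            Polynomial.X ^ 2 := by simp [evalMap]
        rw [h1]
        intro n hn
        rw [Polynomial.coeff_X_pow]
        split_ifs with h
        · subst h; rw [Nat.odd_iff] at hn; omega
        · exact dvd_zero 2
      · have h1 : evalMap (2 * Ideal.Quotient.mk cohIdeal (X 1)) =
            2 * Polynomial.X := by
          rw [two_mul, two_mul, map_add]; simp [evalMap]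
        rw [h1]
        intro n _
        rw [two_mul, Polynomial.coeff_add]
        exact ⟨_, (two_mul _).symm⟩
      · have h1 : evalMap (Ideal.Quotient.mk cohIdeal (X 2) ^ 2) = 0 := by
          simp [evalMap, Matrix.cons_val_two]
        rw [h1]
        exact Subring.zero_mem _
    have hx := hsub hmem
    rw [Subring.mem_comap] at hx
    have heval : evalMap (Ideal.Quotient.mk cohIdeal (X 0 ^ j₁ * X 1 ^ j₂)) =
        Polynomial.X ^ j₂ := by
      simp [evalMap]
    rw [heval] at hx
    have hc := hx j₂ hodd
    rw [Polynomial.coeff_X_pow, if_pos rfl] at hc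
    norm_num at hc
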